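/- Let I ⊆ ℝ be an open interval and let u : ℝ → ℝ be three times differentiable on I with u‴(x)·(u′(x)² − 2·u(x)·u″(x))·u(x)² + 1 = 0 for all x ∈ I. Then for every t ∈ ℝ, the function v(x) := (1 + t·x)²·u(x/(1 + t·x)) satisfies v‴(x)·(v′(x)² − 2·v(x)·v″(x))·v(x)² + 1 = 0 at every x with 1 + t·x ≠ 0 and x/(1 + t·x) ∈ I. (The vector field v₂ = x²∂ₓ + 2xu∂ᵤ of (7.3) generates a symmetry group of equation (7.1) of the paper.) -/

import Mathlib

/-- The vector field `v₂ = x² ∂ₓ + 2xu ∂ᵤ` generates a symmetry group of equation (7.1). -/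
theorem projective_symmetry_exampleII (a b t : ℝ) (u : ℝ → ℝ)
    (hu1 : ∀ x ∈ Set.Ioo a b, DifferentiableAt ℝ u x)
    (hu2 : ∀ x ∈ Set.Ioo a b, DifferentiableAt ℝ (deriv u) x)
    (hu3 : ∀ x ∈ Set.Ioo a b, DifferentiableAt ℝ (deriv (deriv u)) x)
    (hode : ∀ x ∈ Set.Ioo a b,
      deriv (deriv (deriv u)) x * ((deriv u x) ^ 2 - 2 * u x * deriv (deriv u) x)
        * (u x) ^ 2 + 1 = 0) :
    ∀ x : ℝ, 1 + t * x ≠ 0 → x / (1 + t * x) ∈ Set.Ioo a b →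
      deriv (deriv (deriv (fun y => (1 + t * y) ^ 2 * u (y / (1 + t * y))))) x *
          ((deriv (fun y => (1 + t * y) ^ 2 * u (y / (1 + t * y))) x) ^ 2
            - 2 * (fun y => (1 + t * y) ^ 2 * u (y / (1 + t * y))) x *
                deriv (deriv (fun y => (1 + t * y) ^ 2 * u (y / (1 + t * y)))) x) *
          ((fun y => (1 + t * y) ^ 2 * u (y / (1 + t * y))) x) ^ 2 + 1 = 0 := by
  intro x hx hxw
  set w : ℝ → ℝ := fun y => y / (1 + t * y) with hw_def
  set v : ℝ → ℝ := fun y => (1 + t * y) ^ 2 * u (y / (1 + t * y)) with hv_def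
  set S : Set ℝ := {y | 1 + t * y ≠ 0 ∧ w y ∈ Set.Ioo a b} with hS_def
  have hxS : x ∈ S := ⟨hx, hxw⟩
  have hSopen : IsOpen S := by
    rw [isOpen_iff_mem_nhds]
    intro y hy
    have h1 : ∀ᶠ z in nhds y, 1 + t * z ≠ 0 := by
      have : ContinuousAt (fun z => 1 + t * z) y := by fun_prop
      exact this.eventually_ne hy.1
    have h2 : ∀ᶠ z in nhds y, w z ∈ Set.Ioo a b := by
      have hc : ContinuousAt w y :=
        ContinuousAt.div continuousAt_id
          ((continuous_const.add (continuous_const.mul continuous_id)).continuousAt) hy.1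
      exact hc.eventually_mem (isOpen_Ioo.mem_nhds hy.2)
    filter_upwards [h1, h2] with z hz1 hz2 using ⟨hz1, hz2⟩
  -- derivative of w
  have hw' : ∀ y ∈ S, HasDerivAt w (1 / (1 + t * y) ^ 2) y := by
    intro y hy
    have := (hasDerivAt_id y).div ((hasDerivAt_const y 1).add ((hasDerivAt_id y).const_mul t)) hy.1
    refine this.congr_deriv ?_
    simp only [id_eq, Pi.add_apply]
    congr 1
    ring
  -- first derivative of v
  have hv1 : ∀ y ∈ S, HasDerivAt v (2 * t * (1 + t * y) * u (w y) + deriv u (w y)) y := by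
    intro y hy
    have hs : HasDerivAt (fun z => (1 + t * z) ^ 2) (2 * (1 + t * y) * t) y := by
      have := (((hasDerivAt_const y 1).add ((hasDerivAt_id y).const_mul t))).pow 2
      refine this.congr_deriv ?_
      try simp only [id_eq, Pi.add_apply]
      ring
    have huw : HasDerivAt (fun z => u (w z)) (deriv u (w y) * (1 / (1 + t * y) ^ 2)) y :=
      ((hu1 _ hy.2).hasDerivAt).comp y (hw' y hy)
    have := hs.mul huw
    refine this.congr_deriv ?_
    have h1 : (1 : ℝ) + t * y ≠ 0 := hy.1
    have h2 : ((1 : ℝ) + t * y) ^ 2 ≠ 0 := pow_ne_zero 2 hy.1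
    field_simp
    try simp
  have hd1 : ∀ y ∈ S, deriv v y = 2 * t * (1 + t * y) * u (w y) + deriv u (w y) :=
    fun y hy => (hv1 y hy).deriv
  -- second derivative
  have hv2 : ∀ y ∈ S, HasDerivAt (deriv v)
      (2 * t ^ 2 * u (w y) + 2 * t * deriv u (w y) / (1 + t * y)
        + deriv (deriv u) (w y) / (1 + t * y) ^ 2) y := by
    intro y hy
    have heq : deriv v =ᶠ[nhds y] fun z => 2 * t * (1 + t * z) * u (w z) + deriv u (w z) := by
      filter_upwards [hSopen.mem_nhds hy] with z hz using hd1 z hz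
    have hs : HasDerivAt (fun z => 2 * t * (1 + t * z)) (2 * t * t) y := by
      have := (((hasDerivAt_const y 1).add ((hasDerivAt_id y).const_mul t))).const_mul (2 * t)
      refine this.congr_deriv ?_
      try simp only [id_eq]
      ring
    have huw : HasDerivAt (fun z => u (w z)) (deriv u (w y) * (1 / (1 + t * y) ^ 2)) y :=
      ((hu1 _ hy.2).hasDerivAt).comp y (hw' y hy)
    have hu'w : HasDerivAt (fun z => deriv u (w z))
        (deriv (deriv u) (w y) * (1 / (1 + t * y) ^ 2)) y :=
      ((hu2 _ hy.2).hasDerivAt).comp y (hw' y hy)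
    have := (hs.mul huw).add hu'w
    refine HasDerivAt.congr_of_eventuallyEq ?_ heq
    refine this.congr_deriv ?_
    have h1 : (1 : ℝ) + t * y ≠ 0 := hy.1
    have h2 : ((1 : ℝ) + t * y) ^ 2 ≠ 0 := pow_ne_zero 2 hy.1
    field_simp
  have hd2 : ∀ y ∈ S, deriv (deriv v) y = 2 * t ^ 2 * u (w y)
      + 2 * t * deriv u (w y) / (1 + t * y) + deriv (deriv u) (w y) / (1 + t * y) ^ 2 :=
    fun y hy => (hv2 y hy).deriv
  -- third derivative
  have hv3 : HasDerivAt (deriv (deriv v))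
      (deriv (deriv (deriv u)) (w x) / (1 + t * x) ^ 4) x := by
    have heq : deriv (deriv v) =ᶠ[nhds x] fun z => 2 * t ^ 2 * u (w z)
        + 2 * t * deriv u (w z) / (1 + t * z) + deriv (deriv u) (w z) / (1 + t * z) ^ 2 := by
      filter_upwards [hSopen.mem_nhds hxS] with z hz using hd2 z hz
    have huw : HasDerivAt (fun z => u (w z)) (deriv u (w x) * (1 / (1 + t * x) ^ 2)) x :=
      ((hu1 _ hxw).hasDerivAt).comp x (hw' x hxS)
    have hu'w : HasDerivAt (fun z => deriv u (w z))
        (deriv (deriv u) (w x) * (1 / (1 + t * x) ^ 2)) x :=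
      ((hu2 _ hxS.2).hasDerivAt).comp x (hw' x hxS)
    have hu''w : HasDerivAt (fun z => deriv (deriv u) (w z))
        (deriv (deriv (deriv u)) (w x) * (1 / (1 + t * x) ^ 2)) x :=
      ((hu3 _ hxS.2).hasDerivAt).comp x (hw' x hxS)
    have hs : HasDerivAt (fun z : ℝ => 1 + t * z) t x := by
      exact ((hasDerivAt_const x 1).add ((hasDerivAt_id x).const_mul t)).congr_deriv (by simp)
    have hs2 : HasDerivAt (fun z : ℝ => (1 + t * z) ^ 2) (2 * (1 + t * x) * t) x := by
      have := hs.pow 2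
      refine this.congr_deriv ?_
      ring
    have h1 := huw.const_mul (2 * t ^ 2)
    have h2 := (hu'w.const_mul (2 * t)).div hs hx
    have h3 := hu''w.div hs2 (pow_ne_zero 2 hx)
    have := (h1.add h2).add h3
    refine HasDerivAt.congr_of_eventuallyEq ?_ heq
    refine this.congr_deriv ?_
    have h1 : (1 : ℝ) + t * x ≠ 0 := hx
    have h2 : ((1 : ℝ) + t * x) ^ 2 ≠ 0 := pow_ne_zero 2 hx
    field_simp
    ring
  -- conclude
  have hode' := hode (w x) hxw
  have e1 : deriv v x = 2 * t * (1 + t * x) * u (w x) + deriv u (w x) := hd1 x hxS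
  have e2 : deriv (deriv v) x = 2 * t ^ 2 * u (w x)
      + 2 * t * deriv u (w x) / (1 + t * x) + deriv (deriv u) (w x) / (1 + t * x) ^ 2 :=
    hd2 x hxS
  have e3 : deriv (deriv (deriv v)) x = deriv (deriv (deriv u)) (w x) / (1 + t * x) ^ 4 :=
    hv3.deriv
  show deriv (deriv (deriv v)) x * ((deriv v x) ^ 2 - 2 * v x * deriv (deriv v) x)
      * (v x) ^ 2 + 1 = 0
  have hvx : v x = (1 + t * x) ^ 2 * u (w x) := rfl
  rw [e1, e2, e3, hvx]
  set s := 1 + t * x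
  set A := u (w x)
  set B := deriv u (w x)
  set C := deriv (deriv u) (w x)
  set D := deriv (deriv (deriv u)) (w x)
  have key : (2 * t * s * A + B) ^ 2
      - 2 * (s ^ 2 * A) * (2 * t ^ 2 * A + 2 * t * B / s + C / s ^ 2)
      = B ^ 2 - 2 * A * C := by
    field_simp
    ring
  rw [key]
  have key2 : D / s ^ 4 * (B ^ 2 - 2 * A * C) * (s ^ 2 * A) ^ 2
      = D * (B ^ 2 - 2 * A * C) * A ^ 2 := by
    field_simp
  rw [key2]
  exact hode'
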